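/- Let F = GF(2^n) and let f = Inv ∘ (0,1) (the inverse function with values at 0 and 1 swapped). The number of pairs (a,b) ∈ F* × F*, a ≠ b, satisfying a^2·b + a·b^2 + a^2 + b^2 + a·b = 0 equals 2^n - 2 if n is odd and 2^n - 4 if n is even. -/

import Mathlib

theorem stmt_9 {F : Type*} [Field F] [Fintype F] [DecidableEq F] {n : ℕ}
    (hn : 0 < n) (hF : Fintype.card F = 2 ^ n) :
    (Finset.univ.filter fun q : F × F =>
      q.1 ≠ 0 ∧ q.2 ≠ 0 ∧ q.1 ≠ q.2 ∧
        q.1 ^ 2 * q.2 + q.1 * q.2 ^ 2 + q.1 ^ 2 + q.2 ^ 2 + q.1 * q.2 = 0).card =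
    if Odd n then 2 ^ n - 2 else 2 ^ n - 4 := by
  classical
  -- characteristic 2
  have h2 : (2 : F) = 0 := by
    have h := FiniteField.cast_card_eq_zero F
    rw [hF] at h
    push_cast at h
    exact (pow_eq_zero_iff hn.ne').mp h
  have hden : ∀ x : F, x ≠ 0 → x ≠ 1 → x ^ 2 + x ≠ 0 := by
    intro x h0 h1 h
    have hx : x * (x + 1) = 0 := by linear_combination h
    rcases mul_eq_zero.mp hx with h' | h'
    · exact h0 h'
    · exact h1 (by linear_combination h' - h2)
  -- the bijection with {x | x ≠ 0, x ≠ 1, x^2+x+1 ≠ 0}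
  set T : Finset F := Finset.univ.filter
      (fun x : F => x ≠ 0 ∧ x ≠ 1 ∧ x ^ 2 + x + 1 ≠ 0) with hT
  have hcard : (Finset.univ.filter fun q : F × F =>
      q.1 ≠ 0 ∧ q.2 ≠ 0 ∧ q.1 ≠ q.2 ∧
        q.1 ^ 2 * q.2 + q.1 * q.2 ^ 2 + q.1 ^ 2 + q.2 ^ 2 + q.1 * q.2 = 0).card
      = T.card := by
    apply Finset.card_nbij' (fun q => q.2 / q.1)
      (fun x => ((x ^ 2 + x + 1) / (x ^ 2 + x), (x ^ 2 + x + 1) / (x ^ 2 + x) * x))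
    · intro q (hq : q ∈ Finset.filter _ _)
      show q.2 / q.1 ∈ T
      simp only [hT, Finset.mem_filter, Finset.mem_univ, true_and] at hq ⊢
      obtain ⟨ha, hb, hab, heq⟩ := hq
      refine ⟨div_ne_zero hb ha, ?_, ?_⟩
      · intro h
        exact hab ((div_eq_one_iff_eq ha).mp h).symm
      · intro h
        have hkey : q.2 ^ 2 + q.1 * q.2 + q.1 ^ 2 = 0 := by
          have : q.2 ^ 2 + q.1 * q.2 + q.1 ^ 2
              = q.1 ^ 2 * ((q.2 / q.1) ^ 2 + q.2 / q.1 + 1) := by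
            field_simp
          rw [this, h, mul_zero]
        have h3 : q.1 * q.2 * (q.1 + q.2) = 0 := by linear_combination heq - hkey
        rcases mul_eq_zero.mp h3 with h' | h'
        · rcases mul_eq_zero.mp h' with h'' | h''
          · exact ha h''
          · exact hb h''
        · exact hab (by linear_combination h' - q.2 * h2)
    · intro x (hx : x ∈ T)
      show _ ∈ Finset.filter _ _
      simp only [hT, Finset.mem_filter, Finset.mem_univ, true_and] at hx ⊢
      obtain ⟨h0, h1, hp⟩ := hx
      have hd : x ^ 2 + x ≠ 0 := hden x h0 h1
      have ha : (x ^ 2 + x + 1) / (x ^ 2 + x) ≠ 0 := div_ne_zero hp hd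
      refine ⟨ha, mul_ne_zero ha h0, ?_, ?_⟩
      · intro h
        apply h1
        have := mul_left_cancel₀ ha
          (show (x ^ 2 + x + 1) / (x ^ 2 + x) * 1 = (x ^ 2 + x + 1) / (x ^ 2 + x) * x by
            rw [mul_one]; exact h)
        exact this.symm
      · have had : (x ^ 2 + x + 1) / (x ^ 2 + x) * (x ^ 2 + x) = x ^ 2 + x + 1 :=
          div_mul_cancel₀ _ hd
        set a := (x ^ 2 + x + 1) / (x ^ 2 + x) with ha'
        linear_combination a ^ 2 * had + (x ^ 2 + x + 1) * a ^ 2 * h2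
    · intro q (hq : q ∈ Finset.filter _ _)
      simp only [Finset.mem_filter, Finset.mem_univ, true_and] at hq
      obtain ⟨ha, hb, hab, heq⟩ := hq
      have hx0 : q.2 / q.1 ≠ 0 := div_ne_zero hb ha
      have hx1 : q.2 / q.1 ≠ 1 := fun h => hab ((div_eq_one_iff_eq ha).mp h).symm
      have hd : (q.2 / q.1) ^ 2 + q.2 / q.1 ≠ 0 := hden _ hx0 hx1
      have hkey : q.1 * ((q.2 / q.1) ^ 2 + q.2 / q.1) = (q.2 / q.1) ^ 2 + q.2 / q.1 + 1 := by
        field_simp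
        linear_combination heq - (q.2 ^ 2 + q.1 * q.2 + q.1 ^ 2) * h2
      have h1 : ((q.2 / q.1) ^ 2 + q.2 / q.1 + 1) / ((q.2 / q.1) ^ 2 + q.2 / q.1) = q.1 := by
        rw [← hkey, mul_div_assoc, div_self hd, mul_one]
      refine Prod.ext ?_ ?_
      · exact h1
      · show ((q.2 / q.1) ^ 2 + q.2 / q.1 + 1) / ((q.2 / q.1) ^ 2 + q.2 / q.1) * (q.2 / q.1) = q.2
        rw [h1, mul_div_cancel₀ _ ha]
    · intro x (hx : x ∈ T)
      simp only [hT, Finset.mem_filter, Finset.mem_univ, true_and] at hx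
      obtain ⟨h0, h1, hp⟩ := hx
      have hd : x ^ 2 + x ≠ 0 := hden x h0 h1
      have ha : (x ^ 2 + x + 1) / (x ^ 2 + x) ≠ 0 := div_ne_zero hp hd
      exact mul_div_cancel_left₀ x ha
  rw [hcard]
  -- powers of two mod 3
  have pow_mod : ∀ m : ℕ, 2 ^ m % 3 = if Even m then 1 else 2 := by
    intro m
    induction m with
    | zero => simp
    | succ k ih =>
      rw [pow_succ, Nat.mul_mod, ih]
      by_cases h : Even k <;> simp [h, Nat.even_add_one]
  have hge : 1 ≤ 2 ^ n := Nat.one_le_two_pow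
  have hcardu : Fintype.card Fˣ = 2 ^ n - 1 := by
    rw [Fintype.card_units, hF]
  have hcu : Fintype.card F = 2 ^ n := hF
  by_cases hpar : Odd n
  · -- n odd: no roots of x^2+x+1
    have hroots : ∀ x : F, x ^ 2 + x + 1 ≠ 0 := by
      intro x h
      have hx0 : x ≠ 0 := by rintro rfl; simp at h
      have hx1 : x ≠ 1 := by
        rintro rfl
        exact one_ne_zero (by linear_combination h - h2 : (1 : F) = 0)
      have hx3 : x ^ 3 = 1 := by linear_combination (x - 1) * h
      set u : Fˣ := Units.mk0 x hx0 with hu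
      have hu3 : u ^ 3 = 1 := by
        ext
        push_cast [hu]
        exact hx3
      have hord : orderOf u = 3 := by
        have hdvd : orderOf u ∣ 3 := orderOf_dvd_of_pow_eq_one hu3
        rcases (Nat.prime_three.eq_one_or_self_of_dvd _ hdvd) with h | h
        · exfalso
          apply hx1
          have h1 := orderOf_eq_one_iff.mp h
          have : (u : F) = 1 := by rw [h1]; rfl
          simpa [hu] using this
        · exact h
      have h3dvd : (3 : ℕ) ∣ 2 ^ n - 1 := by
        rw [← hcardu, ← hord]; exact orderOf_dvd_card
      have := pow_mod n
      rw [if_neg ((Nat.not_even_iff_odd.mpr hpar))] at this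
      omega
    have hTeq : T = Finset.univ \ {0, 1} := by
      ext x
      simp only [hT, Finset.mem_filter, Finset.mem_univ, true_and, Finset.mem_sdiff,
        Finset.mem_insert, Finset.mem_singleton]
      have h3 := hroots x
      tauto
    rw [if_pos hpar, hTeq, Finset.card_sdiff_of_subset (Finset.subset_univ _), Finset.card_univ, hcu]
    have : ({0, 1} : Finset F).card = 2 := by
      rw [Finset.card_insert_of_notMem (by simp), Finset.card_singleton]
    rw [this]
  · -- n even: exactly two roots
    have hneven : Even n := Nat.not_odd_iff_even.mp hpar
    have h3dvd : (3 : ℕ) ∣ Fintype.card Fˣ := by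
      rw [hcardu]
      have := pow_mod n
      rw [if_pos hneven] at this
      omega
    haveI : Fact (Nat.Prime 3) := ⟨by norm_num⟩
    obtain ⟨u, hord⟩ := exists_prime_orderOf_dvd_card 3 h3dvd
    set z : F := (u : F) with hz
    have hz3 : z ^ 3 = 1 := by
      have := pow_orderOf_eq_one u
      rw [hord] at this
      have : ((u ^ 3 : Fˣ) : F) = 1 := by rw [this]; rfl
      simpa [hz] using this
    have hz1 : z ≠ 1 := by
      intro h
      have : u = 1 := Units.ext (by simpa [hz] using h)
      rw [this, orderOf_one] at hord
      norm_num at hord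
    have hzr : z ^ 2 + z + 1 = 0 := by
      have hfac : (z - 1) * (z ^ 2 + z + 1) = 0 := by linear_combination hz3
      rcases mul_eq_zero.mp hfac with h | h
      · exact absurd (by linear_combination h : z = 1) hz1
      · exact h
    have hz0 : z ≠ 0 := by
      intro h
      exact one_ne_zero (by linear_combination hzr - (z + 1) * h : (1 : F) = 0)
    have hchar : ∀ x : F, x ^ 2 + x + 1 = 0 ↔ x = z ∨ x = z + 1 := by
      intro x
      have hfac : x ^ 2 + x + 1 = (x - z) * (x - (z + 1)) := by
        linear_combination -hzr + (x * z + x + 1) * h2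
      rw [hfac, mul_eq_zero, sub_eq_zero, sub_eq_zero]
    -- distinctness
    have hz1' : z + 1 ≠ 0 := fun h => hz1 (by linear_combination h - h2)
    have hz1'' : z + 1 ≠ 1 := fun h => hz0 (by linear_combination h)
    have hzz : z ≠ z + 1 := fun h => one_ne_zero (by linear_combination -h : (1 : F) = 0)
    have hTeq : T = Finset.univ \ {0, 1, z, z + 1} := by
      ext x
      simp only [hT, Finset.mem_filter, Finset.mem_univ, true_and, Finset.mem_sdiff,
        Finset.mem_insert, Finset.mem_singleton]
      constructor
      · rintro ⟨h0, h1, hp⟩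
        rintro (h | h | h | h)
        · exact h0 h
        · exact h1 h
        · exact hp ((hchar x).mpr (Or.inl h))
        · exact hp ((hchar x).mpr (Or.inr h))
      · intro h
        push_neg at h
        refine ⟨h.1, h.2.1, fun hp => ?_⟩
        rcases (hchar x).mp hp with h' | h'
        · exact h.2.2.1 h'
        · exact h.2.2.2 h'
    rw [if_neg hpar, hTeq, Finset.card_sdiff_of_subset (Finset.subset_univ _), Finset.card_univ, hcu]
    have h0mem : (0 : F) ∉ ({1, z, z + 1} : Finset F) := by
      simp only [Finset.mem_insert, Finset.mem_singleton]
      push_neg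
      exact ⟨fun h => one_ne_zero h.symm, fun h => hz0 h.symm, fun h => hz1' h.symm⟩
    have h1mem : (1 : F) ∉ ({z, z + 1} : Finset F) := by
      simp only [Finset.mem_insert, Finset.mem_singleton]
      push_neg
      exact ⟨fun h => hz1 h.symm, fun h => hz1'' h.symm⟩
    have hzmem : z ∉ ({z + 1} : Finset F) := by
      simp only [Finset.mem_singleton]
      exact hzz
    have : ({0, 1, z, z + 1} : Finset F).card = 4 := by
      rw [Finset.card_insert_of_notMem h0mem, Finset.card_insert_of_notMem h1mem,
        Finset.card_insert_of_notMem hzmem, Finset.card_singleton]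
    rw [this]
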